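/- arXiv:2510.26925 — 4 statements merged into one kernel-verified Lean document; each statement's English description precedes it below -/
import Mathlib

section
/- Let T > 0 and let x be a nonzero real number. Then the symmetric limit lim_{R→∞} (1/(2π)) ∫_{-R}^{R} e^{x(T+it)}/(T+it) dt exists and equals 1 if x > 0 and equals 0 if x < 0. -/
set_option maxHeartbeats 1000000

open Complex Filter Set intervalIntegral Real Topology

lemma hbound (x σ c R : ℝ) (hR : 0 < R) (hc : |c| = R) :
    ‖Complex.exp (x*(σ + c*I))/(σ + c*I)‖ ≤ Real.exp (x*σ) / R := by
  rw [norm_div, Complex.norm_exp]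
  have him : (↑σ + ↑c*I).im = c := by simp
  have hre : ((x:ℂ)*(σ + c*I)).re = x*σ := by simp
  rw [hre]
  apply div_le_div_of_nonneg_left (Real.exp_pos _).le hR
  calc R = |(↑σ + ↑c*I).im| := by rw [him, hc]
    _ ≤ ‖(↑σ + ↑c*I : ℂ)‖ := Complex.abs_im_le_norm _

lemma vbound (x a t : ℝ) (ha : 0 < a) :
    ‖Complex.exp (x*(a + t*I))/(a + t*I)‖ ≤ Real.exp (x*a) / a := by
  rw [norm_div, Complex.norm_exp]
  have hre : ((x:ℂ)*(a + t*I)).re = x*a := by simp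
  rw [hre]
  apply div_le_div_of_nonneg_left (Real.exp_pos _).le ha
  calc a = ((a:ℂ) + t*I).re := by simp
    _ ≤ |((a:ℂ) + t*I).re| := le_abs_self _
    _ ≤ ‖((a:ℂ) + t*I)‖ := Complex.abs_re_le_norm _

lemma expint (x T R : ℝ) (hx : x < 0) (hTR : T ≤ R) :
    ∫ σ in T..R, Real.exp (x*σ) ≤ Real.exp (x*T) / (-x) := by
  have : ∫ σ in T..R, Real.exp (x*σ) = (Real.exp (x*R) - Real.exp (x*T))/x := by
    have h : ∀ σ ∈ uIcc T R, HasDerivAt (fun u => Real.exp (x*u)/x) (Real.exp (x*σ)) σ := by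
      intro σ _
      have := ((Real.hasDerivAt_exp (x*σ)).comp σ ((hasDerivAt_id σ).const_mul x)).div_const x
      simpa [mul_comm, mul_div_assoc, mul_div_cancel_left₀ _ hx.ne] using this
    rw [intervalIntegral.integral_eq_sub_of_hasDerivAt h]
    · ring
    · exact (Real.continuous_exp.comp (continuous_const.mul continuous_id)).intervalIntegrable _ _
  rw [this, show (Real.exp (x*R) - Real.exp (x*T))/x = (Real.exp (x*T) - Real.exp (x*R))/(-x) by
    rw [div_eq_div_iff hx.ne (by linarith)]; ring]
  gcongr
  · linarith
  · nlinarith [Real.exp_pos (x*R)]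

-- continuity of a horizontal-segment integrand
lemma contH (x c : ℝ) (hc : c ≠ 0) :
    Continuous (fun σ : ℝ => Complex.exp (x*(σ + c*I))/(σ + c*I)) := by
  have hden : ∀ σ : ℝ, (σ:ℂ) + c*I ≠ 0 := by
    intro σ h
    have : ((σ:ℂ) + c*I).im = 0 := by rw [h]; simp
    simp at this; exact hc this
  exact (Complex.continuous_exp.comp (continuous_const.mul
    ((Complex.continuous_ofReal).add continuous_const))).div
    ((Complex.continuous_ofReal).add continuous_const) hden

-- horizontal integral bound
lemma horizBound (x T R c : ℝ) (hx : x < 0) (hT : 0 < T) (hTR : T ≤ R) (hR : 0 < R)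
    (hc : |c| = R) :
    ‖∫ σ : ℝ in T..R, Complex.exp (x*(σ + c*I))/(σ + c*I)‖ ≤ (Real.exp (x*T)/(-x))/R := by
  have hc0 : c ≠ 0 := by intro h; rw [h] at hc; simp at hc; linarith
  calc ‖∫ σ : ℝ in T..R, Complex.exp (x*(σ + c*I))/(σ + c*I)‖
      ≤ ∫ σ in T..R, ‖Complex.exp (x*(σ + c*I))/(σ + c*I)‖ :=
        intervalIntegral.norm_integral_le_integral_norm hTR
    _ ≤ ∫ σ in T..R, Real.exp (x*σ)/R := by
        apply intervalIntegral.integral_mono_on hTR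
        · exact ((contH x c hc0).norm).intervalIntegrable _ _
        · exact ((Real.continuous_exp.comp (continuous_const.mul continuous_id)).div_const R).intervalIntegrable _ _
        · intro σ _; exact hbound x σ c R hR hc
    _ = (∫ σ in T..R, Real.exp (x*σ))/R := by rw [intervalIntegral.integral_div]
    _ ≤ (Real.exp (x*T)/(-x))/R := by gcongr; exact expint x T R hx hTR

lemma lemA (x T : ℝ) (hx : x < 0) (hT : 0 < T) :
    Tendsto (fun R : ℝ => ∫ t : ℝ in (-R)..R,
      Complex.exp (x*((T:ℝ) + t*I))/((T:ℝ) + t*I)) atTop (𝓝 0) := by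
  apply squeeze_zero_norm' (a := fun R => 2*((Real.exp (x*T)/(-x))/R) + 2*Real.exp (x*R))
  · filter_upwards [eventually_ge_atTop (max T 1)] with R hR
    have hTR : T ≤ R := le_trans (le_max_left _ _) hR
    have hR0 : (0:ℝ) < R := lt_of_lt_of_le (by norm_num) (le_trans (le_max_right _ _) hR)
    -- boundary identity
    have H := Complex.integral_boundary_rect_eq_zero_of_differentiableOn
      (fun s => Complex.exp (x*s)/s) ⟨T, -R⟩ ⟨R, R⟩ ?_
    swap
    · intro s hs
      rw [Complex.mem_reProdIm] at hs
      have h1 := hs.1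
      simp only [Complex.ofReal_re] at h1
      rw [uIcc_of_le hTR] at h1
      have hre : T ≤ s.re := h1.1
      have hs0 : s ≠ 0 := fun h => by rw [h] at hre; simp at hre; linarith
      exact (((differentiableAt_id.const_mul ((x:ℂ))).cexp).div differentiableAt_id hs0).differentiableWithinAt
    have H2 : (∫ σ : ℝ in T..R, Complex.exp (x*(σ + (-R:ℝ)*I))/(σ + (-R:ℝ)*I)) -
        (∫ σ : ℝ in T..R, Complex.exp (x*(σ + (R:ℝ)*I))/(σ + (R:ℝ)*I)) +
        I • (∫ t : ℝ in (-R)..R, Complex.exp (x*((R:ℝ) + t*I))/((R:ℝ) + t*I)) -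
        I • (∫ t : ℝ in (-R)..R, Complex.exp (x*((T:ℝ) + t*I))/((T:ℝ) + t*I)) = 0 := by
      simpa using H
    have Htgt : I • (∫ t : ℝ in (-R)..R, Complex.exp (x*((T:ℝ) + t*I))/((T:ℝ) + t*I)) =
        (∫ σ : ℝ in T..R, Complex.exp (x*(σ + (-R:ℝ)*I))/(σ + (-R:ℝ)*I)) -
        (∫ σ : ℝ in T..R, Complex.exp (x*(σ + (R:ℝ)*I))/(σ + (R:ℝ)*I)) +
        I • (∫ t : ℝ in (-R)..R, Complex.exp (x*((R:ℝ) + t*I))/((R:ℝ) + t*I)) := by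
      linear_combination -H2
    have hnorm : ‖∫ t : ℝ in (-R)..R, Complex.exp (x*((T:ℝ) + t*I))/((T:ℝ) + t*I)‖ =
        ‖I • (∫ t : ℝ in (-R)..R, Complex.exp (x*((T:ℝ) + t*I))/((T:ℝ) + t*I))‖ := by
      rw [norm_smul, Complex.norm_I, one_mul]
    rw [hnorm, Htgt]
    have hbot := horizBound x T R (-R) hx hT hTR hR0 (by rw [abs_neg, abs_of_pos hR0])
    have htop := horizBound x T R R hx hT hTR hR0 (abs_of_pos hR0)
    have hright : ‖I • (∫ t : ℝ in (-R)..R, Complex.exp (x*((R:ℝ) + t*I))/((R:ℝ) + t*I))‖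
        ≤ 2*Real.exp (x*R) := by
      rw [norm_smul, Complex.norm_I, one_mul]
      have := intervalIntegral.norm_integral_le_of_norm_le_const
        (C := Real.exp (x*R)/R) (a := -R) (b := R)
        (f := fun t : ℝ => Complex.exp (x*((R:ℝ) + t*I))/((R:ℝ) + t*I)) ?_
      · calc ‖∫ t : ℝ in (-R)..R, Complex.exp (x*((R:ℝ) + t*I))/((R:ℝ) + t*I)‖
            ≤ Real.exp (x*R)/R * |R - (-R)| := this
          _ = 2*Real.exp (x*R) := by
              rw [show R - (-R) = 2*R by ring, abs_of_pos (by linarith)]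
              field_simp
      · intro t _
        exact vbound x R t hR0
    have step1 := norm_add_le ((∫ σ : ℝ in T..R, Complex.exp (x*(σ + (-R:ℝ)*I))/(σ + (-R:ℝ)*I)) -
        (∫ σ : ℝ in T..R, Complex.exp (x*(σ + (R:ℝ)*I))/(σ + (R:ℝ)*I)))
        (I • (∫ t : ℝ in (-R)..R, Complex.exp (x*((R:ℝ) + t*I))/((R:ℝ) + t*I)))
    have step2 := norm_sub_le (∫ σ : ℝ in T..R, Complex.exp (x*(σ + (-R:ℝ)*I))/(σ + (-R:ℝ)*I))
        (∫ σ : ℝ in T..R, Complex.exp (x*(σ + (R:ℝ)*I))/(σ + (R:ℝ)*I))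
    linarith
  · have h1 : Tendsto (fun R : ℝ => 2*((Real.exp (x*T)/(-x))/R)) atTop (𝓝 0) := by
      simpa using ((tendsto_const_nhds (x := (Real.exp (x*T)/(-x) : ℝ)) (f := atTop)).div_atTop tendsto_id).const_mul 2
    have h2 : Tendsto (fun R : ℝ => 2*Real.exp (x*R)) atTop (𝓝 0) := by
      have : Tendsto (fun R : ℝ => x*R) atTop atBot := by
        exact Tendsto.const_mul_atTop_of_neg hx tendsto_id
      simpa using (Real.tendsto_exp_atBot.comp this).const_mul 2
    simpa using h1.add h2

-- antiderivative of (σ + cI)⁻¹ along horizontal segment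
lemma inv_h (c : ℝ) (hc : c ≠ 0) (a b : ℝ) :
    ∫ σ : ℝ in a..b, ((σ:ℂ) + c*I)⁻¹ =
      Complex.log (b + c*I) - Complex.log (a + c*I) := by
  apply intervalIntegral.integral_eq_sub_of_hasDerivAt
  · intro σ _
    have hmem : (σ:ℂ) + c*I ∈ Complex.slitPlane := by
      apply Or.inr; simp [hc]
    have h1 : HasDerivAt (fun z : ℂ => Complex.log (z + c*I)) (((σ:ℂ) + c*I)⁻¹) σ := by
      simpa [Function.comp_def] using (Complex.hasDerivAt_log hmem).comp (σ:ℂ) ((hasDerivAt_id _).add_const ((c:ℂ)*I))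
    exact h1.comp_ofReal
  · apply Continuous.intervalIntegrable
    apply Continuous.inv₀ (by continuity)
    intro σ h
    have : ((σ:ℂ) + c*I).im = 0 := by rw [h]; simp
    simp at this; exact hc this

-- antiderivative of (T + tI)⁻¹ along vertical segment, T > 0
lemma inv_v (T : ℝ) (hT : 0 < T) (a b : ℝ) :
    ∫ t : ℝ in a..b, ((T:ℂ) + t*I)⁻¹ =
      (-I)*Complex.log (T + b*I) + I*Complex.log (T + a*I) := by
  have key : ∀ t : ℝ, HasDerivAt (fun u : ℝ => (-I)*Complex.log (T + u*I)) (((T:ℂ) + t*I)⁻¹) t := by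
    intro t
    have hmem : (T:ℂ) + t*I ∈ Complex.slitPlane := Or.inl (by simp [hT])
    have hinner : HasDerivAt (fun z : ℂ => (T:ℂ) + z*I) I ((t:ℝ):ℂ) := by
      simpa using ((hasDerivAt_id ((t:ℝ):ℂ)).mul_const I).const_add (T:ℂ)
    have h1 := ((Complex.hasDerivAt_log hmem).comp ((t:ℝ):ℂ) hinner).const_mul (-I)
    have h2 := h1.comp_ofReal
    convert h2 using 1
    · rfl
    have : (-I)*(((T:ℂ) + t*I)⁻¹ * I) = ((T:ℂ) + t*I)⁻¹ * (-(I*I)) := by ring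
    rw [this, Complex.I_mul_I]; ring
  rw [intervalIntegral.integral_eq_sub_of_hasDerivAt (fun t _ => key t)]
  · ring
  · apply Continuous.intervalIntegrable
    apply Continuous.inv₀ (by continuity)
    intro t h
    have : ((T:ℂ) + t*I).re = 0 := by rw [h]; simp
    simp at this; linarith

-- antiderivative of (-T + tI)⁻¹ along vertical segment, T > 0
lemma inv_vneg (T : ℝ) (hT : 0 < T) (a b : ℝ) :
    ∫ t : ℝ in a..b, (-(T:ℂ) + t*I)⁻¹ =
      (-I)*Complex.log (T - b*I) + I*Complex.log (T - a*I) := by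
  have key : ∀ t : ℝ, HasDerivAt (fun u : ℝ => (-I)*Complex.log (T - u*I)) ((-(T:ℂ) + t*I)⁻¹) t := by
    intro t
    have hmem : (T:ℂ) - t*I ∈ Complex.slitPlane := Or.inl (by simp [hT])
    have hinner : HasDerivAt (fun z : ℂ => (T:ℂ) - z*I) (-I) ((t:ℝ):ℂ) := by
      simpa using ((hasDerivAt_id ((t:ℝ):ℂ)).mul_const I).const_sub (T:ℂ)
    have h1 := ((Complex.hasDerivAt_log hmem).comp ((t:ℝ):ℂ) hinner).const_mul (-I)
    have h2 := h1.comp_ofReal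
    convert h2 using 1
    · rfl
    rw [show (-I)*(((T:ℂ) - t*I)⁻¹ * (-I)) = ((T:ℂ) - t*I)⁻¹ * (I*I) by ring, Complex.I_mul_I,
      show (-(T:ℂ) + t*I) = -((T:ℂ) - t*I) by ring, inv_neg]
    ring
  rw [intervalIntegral.integral_eq_sub_of_hasDerivAt (fun t _ => key t)]
  · ring
  · apply Continuous.intervalIntegrable
    apply Continuous.inv₀ (by continuity)
    intro t h
    have : (-(T:ℂ) + t*I).re = 0 := by rw [h]; simp
    simp at this; linarith

lemma log_sub_log_conj (z : ℂ) (hz : z.arg ≠ π) :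
    Complex.log z - Complex.log (starRingEnd ℂ z) = 2*(z.arg : ℂ)*I := by
  rw [Complex.log_conj z hz]
  have := Complex.sub_conj (Complex.log z)
  rw [this, Complex.log_im]
  push_cast; ring

lemma arg_sum (T R : ℝ) (hT : 0 < T) (hR : 0 < R) :
    ((T:ℂ) + R*I).arg + (-(T:ℂ) + R*I).arg = π := by
  have him1 : ((T:ℂ) + R*I).im = R := by simp
  have hz2 : ((T:ℂ) - R*I) = starRingEnd ℂ ((T:ℂ) + R*I) := by
    rw [map_add, Complex.conj_ofReal, map_mul, Complex.conj_ofReal, Complex.conj_I]; ring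
  have harg1 : ((T:ℂ) + R*I).arg ≠ π := by
    intro h; rw [Complex.arg_eq_pi_iff] at h; rcases h with ⟨-, h⟩; rw [him1] at h; linarith
  have h2 : ((T:ℂ) - R*I).arg = -((T:ℂ) + R*I).arg := by
    rw [hz2, Complex.arg_conj, if_neg harg1]
  have h3 : (-(T:ℂ) + R*I) = -((T:ℂ) - R*I) := by ring
  have him2 : ((T:ℂ) - R*I).im = -R := by simp
  rw [h3, Complex.arg_neg_eq_arg_add_pi_of_im_neg (by rw [him2]; linarith), h2]
  ring

lemma Bval (T R : ℝ) (hT : 0 < T) (hR : 0 < R)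
    (b1 : ℂ) (hb1 : b1 = ∫ σ : ℝ in (-T)..T, ((σ:ℂ) + ((-R:ℝ):ℂ)*I)⁻¹)
    (t1 : ℂ) (ht1 : t1 = ∫ σ : ℝ in (-T)..T, ((σ:ℂ) + ((R:ℝ):ℂ)*I)⁻¹)
    (r1 : ℂ) (hr1 : r1 = ∫ t : ℝ in (-R)..R, (((T:ℝ):ℂ) + t*I)⁻¹)
    (l1 : ℂ) (hl1 : l1 = ∫ t : ℝ in (-R)..R, (((-T:ℝ):ℂ) + t*I)⁻¹) :
    b1 - t1 + I*r1 - I*l1 = 2*(π:ℂ)*I := by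
  have harg1 : ((T:ℂ) + R*I).arg ≠ π := by
    intro h; rw [Complex.arg_eq_pi_iff] at h; rcases h with ⟨-, h⟩; simp at h; linarith
  have harg3 : (-(T:ℂ) + R*I).arg ≠ π := by
    intro h; rw [Complex.arg_eq_pi_iff] at h; rcases h with ⟨-, h⟩; simp at h; linarith
  have hz2 : ((T:ℂ) - R*I) = starRingEnd ℂ ((T:ℂ) + R*I) := by
    rw [map_add, Complex.conj_ofReal, map_mul, Complex.conj_ofReal, Complex.conj_I]; ring
  have hz4 : (-(T:ℂ) - R*I) = starRingEnd ℂ (-(T:ℂ) + R*I) := by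
    rw [map_add, map_neg, Complex.conj_ofReal, map_mul, Complex.conj_ofReal, Complex.conj_I]; ring
  have e1 : Complex.log ((T:ℂ) + R*I) - Complex.log ((T:ℂ) - R*I) = 2*(((T:ℂ) + R*I).arg : ℂ)*I := by
    rw [hz2]; exact log_sub_log_conj _ harg1
  have e2 : Complex.log (-(T:ℂ) + R*I) - Complex.log (-(T:ℂ) - R*I) = 2*((-(T:ℂ) + R*I).arg : ℂ)*I := by
    rw [hz4]; exact log_sub_log_conj _ harg3
  -- evaluate the four integrals
  rw [inv_h (-R) (by linarith) (-T) T] at hb1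
  rw [inv_h R hR.ne' (-T) T] at ht1
  rw [inv_v T hT (-R) R] at hr1
  have hl1' : l1 = ∫ t : ℝ in (-R)..R, (-(T:ℂ) + t*I)⁻¹ := by
    rw [hl1]; congr 1; ext t; push_cast; ring_nf
  rw [inv_vneg T hT (-R) R] at hl1'
  have harg := arg_sum T R hT hR
  have : ((((T:ℂ) + R*I).arg : ℂ)) + (((-(T:ℂ) + R*I).arg : ℂ)) = (π:ℂ) := by
    rw [← Complex.ofReal_add, harg]
  rw [hb1, ht1, hr1, hl1']
  have c1 : ((T:ℝ):ℂ) + ((-R:ℝ):ℂ)*I = (T:ℂ) - R*I := by push_cast; ring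
  have c2 : ((-T:ℝ):ℂ) + ((-R:ℝ):ℂ)*I = -(T:ℂ) - R*I := by push_cast; ring
  have c3 : ((-T:ℝ):ℂ) + ((R:ℝ):ℂ)*I = -(T:ℂ) + R*I := by push_cast; ring
  have c4 : ((T:ℝ):ℂ) + ((R:ℝ):ℂ)*I = (T:ℂ) + R*I := by push_cast; ring
  have c6 : ((T:ℝ):ℂ) - ((-R:ℝ):ℂ)*I = (T:ℂ) + R*I := by push_cast; ring
  rw [c1, c2, c3, c4] at *
  rw [c6]
  linear_combination e1 + e2 + 2*I*this +
    2*(Complex.log ((T:ℂ)-R*I) - Complex.log ((T:ℂ)+R*I))*Complex.I_mul_I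

lemma diffG (x : ℝ) : Differentiable ℂ (dslope (fun s : ℂ => Complex.exp ((x:ℂ)*s)) 0) := by
  rw [← differentiableOn_univ, differentiableOn_dslope Filter.univ_mem]
  exact ((differentiable_id.const_mul ((x:ℂ))).cexp).differentiableOn

lemma gval (x : ℝ) (s : ℂ) (hs : s ≠ 0) :
    Complex.exp ((x:ℂ)*s)/s = dslope (fun s : ℂ => Complex.exp ((x:ℂ)*s)) 0 s + s⁻¹ := by
  rw [dslope_of_ne _ hs, slope_def_field]
  rw [mul_zero, Complex.exp_zero]
  field_simp
  ring

lemma split_h (x a b c : ℝ) (hc : c ≠ 0) :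
    ∫ σ : ℝ in a..b, Complex.exp (x*(σ + c*I))/(σ + c*I) =
      (∫ σ : ℝ in a..b, dslope (fun s : ℂ => Complex.exp ((x:ℂ)*s)) 0 (σ + c*I)) +
      ∫ σ : ℝ in a..b, ((σ:ℂ) + c*I)⁻¹ := by
  have hden : ∀ σ : ℝ, (σ:ℂ) + c*I ≠ 0 := by
    intro σ h
    have : ((σ:ℂ) + c*I).im = 0 := by rw [h]; simp
    simp at this; exact hc this
  rw [← intervalIntegral.integral_add]
  · apply intervalIntegral.integral_congr
    intro σ _
    exact gval x _ (hden σ)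
  · exact ((diffG x).continuous.comp (by continuity)).intervalIntegrable _ _
  · exact (Continuous.inv₀ (by continuity) hden).intervalIntegrable _ _

lemma split_v (x a r1 r2 : ℝ) (ha : a ≠ 0) :
    ∫ t : ℝ in r1..r2, Complex.exp (x*((a:ℝ) + t*I))/((a:ℝ) + t*I) =
      (∫ t : ℝ in r1..r2, dslope (fun s : ℂ => Complex.exp ((x:ℂ)*s)) 0 ((a:ℝ) + t*I)) +
      ∫ t : ℝ in r1..r2, (((a:ℝ):ℂ) + t*I)⁻¹ := by
  have hden : ∀ t : ℝ, ((a:ℝ):ℂ) + t*I ≠ 0 := by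
    intro t h
    have : (((a:ℝ):ℂ) + t*I).re = 0 := by rw [h]; simp
    simp at this; exact ha this
  rw [← intervalIntegral.integral_add]
  · apply intervalIntegral.integral_congr
    intro t _
    exact gval x _ (hden t)
  · exact ((diffG x).continuous.comp (by continuity)).intervalIntegrable _ _
  · exact (Continuous.inv₀ (by continuity) hden).intervalIntegrable _ _

section
variable (x T : ℝ)

lemma lemB (hx : 0 < x) (hT : 0 < T) :
    Tendsto (fun R : ℝ => ∫ t : ℝ in (-R)..R,
      Complex.exp (x*((T:ℝ) + t*I))/((T:ℝ) + t*I)) atTop (𝓝 (2*(π:ℂ))) := by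
  -- the three auxiliary boundary pieces
  set bf : ℝ → ℂ := fun R => ∫ σ : ℝ in (-T)..T,
    Complex.exp (x*(σ + (-R:ℝ)*I))/(σ + (-R:ℝ)*I) with hbf
  set tf : ℝ → ℂ := fun R => ∫ σ : ℝ in (-T)..T,
    Complex.exp (x*(σ + (R:ℝ)*I))/(σ + (R:ℝ)*I) with htf
  set lf : ℝ → ℂ := fun R => ∫ t : ℝ in (-R)..R,
    Complex.exp (x*((-T:ℝ) + t*I))/((-T:ℝ) + t*I) with hlf
  -- horizontal pieces tend to 0
  have hhoriz : ∀ (c : ℝ → ℝ), (∀ R, 0 < R → |c R| = R) → Tendsto (fun R : ℝ =>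
      ∫ σ : ℝ in (-T)..T, Complex.exp (x*(σ + (c R:ℝ)*I))/(σ + (c R:ℝ)*I)) atTop (𝓝 0) := by
    intro c hc
    apply squeeze_zero_norm' (a := fun R : ℝ => Real.exp (x*T)/R * |T - (-T)|)
    · filter_upwards [eventually_gt_atTop 0] with R hR0
      apply intervalIntegral.norm_integral_le_of_norm_le_const
      intro σ hσ
      rw [Set.uIoc_of_le (by linarith : -T ≤ T)] at hσ
      have hσT : σ ≤ T := hσ.2
      calc ‖Complex.exp (x*(σ + (c R:ℝ)*I))/(σ + (c R:ℝ)*I)‖ ≤ Real.exp (x*σ)/R :=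
            hbound x σ (c R) R hR0 (hc R hR0)
        _ ≤ Real.exp (x*T)/R := by
            have hσx : x*σ ≤ x*T := mul_le_mul_of_nonneg_left hσT hx.le
            gcongr
    · have : Tendsto (fun R : ℝ => Real.exp (x*T)/R) atTop (𝓝 0) :=
        tendsto_const_nhds.div_atTop tendsto_id
      simpa using this.mul_const _
  have hbot : Tendsto bf atTop (𝓝 0) := by
    have := hhoriz (fun R => -R) (fun R hR => by rw [abs_neg, abs_of_pos hR])
    simpa [hbf] using this
  have htop : Tendsto tf atTop (𝓝 0) := by
    have := hhoriz (fun R => R) (fun R hR => abs_of_pos hR)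
    simpa [htf] using this
  have hleft : Tendsto lf atTop (𝓝 0) := by
    have key : ∀ R : ℝ, lf R = -∫ t : ℝ in (-R)..R,
        Complex.exp (((-x:ℝ):ℂ)*((T:ℝ) + t*I))/((T:ℝ) + t*I) := by
      intro R
      have h1 : (∫ t : ℝ in (-R)..R,
          Complex.exp (x*((-T:ℝ) + (-t)*I))/((-T:ℝ) + (-t)*I)) =
          ∫ t : ℝ in (-R)..R, Complex.exp (x*((-T:ℝ) + t*I))/((-T:ℝ) + t*I) := by
        have := intervalIntegral.integral_comp_neg (a := -R) (b := R)
          (fun t : ℝ => Complex.exp (x*((-T:ℝ) + t*I))/((-T:ℝ) + t*I))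
        simpa using this
      rw [hlf]
      simp only [← h1]
      rw [← intervalIntegral.integral_neg]
      apply intervalIntegral.integral_congr
      intro t _
      simp only
      push_cast
      rw [show (x:ℂ)*(-(T:ℂ) + -(t:ℂ)*I) = -(x:ℂ)*((T:ℂ)+(t:ℂ)*I) by ring,
        show (-(T:ℂ) + -(t:ℂ)*I) = -((T:ℂ)+(t:ℂ)*I) by ring, div_neg]
    have hA := (lemA (-x) T (by linarith) hT).neg
    have hA2 : Tendsto lf atTop (𝓝 (-0)) := by
      apply Filter.Tendsto.congr _ hA
      intro R; exact (key R).symm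
    simpa using hA2
  -- eventual boundary identity
  have hev : ∀ R : ℝ, 0 < R →
      (∫ t : ℝ in (-R)..R, Complex.exp (x*((T:ℝ) + t*I))/((T:ℝ) + t*I)) =
      2*(π:ℂ) + I*(bf R - tf R) + lf R := by
    intro R hR0
    have H := Complex.integral_boundary_rect_eq_zero_of_differentiableOn
      (dslope (fun s : ℂ => Complex.exp ((x:ℂ)*s)) 0) ⟨-T, -R⟩ ⟨T, R⟩
      ((diffG x).differentiableOn)
    have H2 : (∫ σ : ℝ in (-T)..T, dslope (fun s : ℂ => Complex.exp ((x:ℂ)*s)) 0 (σ + (-R:ℝ)*I)) -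
        (∫ σ : ℝ in (-T)..T, dslope (fun s : ℂ => Complex.exp ((x:ℂ)*s)) 0 (σ + (R:ℝ)*I)) +
        I • (∫ t : ℝ in (-R)..R, dslope (fun s : ℂ => Complex.exp ((x:ℂ)*s)) 0 ((T:ℝ) + t*I)) -
        I • (∫ t : ℝ in (-R)..R, dslope (fun s : ℂ => Complex.exp ((x:ℂ)*s)) 0 ((-T:ℝ) + t*I)) = 0 := by
      simpa using H
    have hs1 := split_h x (-T) T (-R) (by linarith)
    have hs2 := split_h x (-T) T R hR0.ne'
    have hs3 := split_v x T (-R) R hT.ne'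
    have hs4 := split_v x (-T) (-R) R (by linarith)
    have hB := Bval T R hT hR0 _ rfl _ rfl _ rfl _ rfl
    rw [smul_eq_mul, smul_eq_mul] at H2
    rw [hbf, htf, hlf]
    simp only
    linear_combination hs3 - I*hs1 + I*hs2 - hs4 - I*H2 - I*hB +
      ((∫ t : ℝ in (-R)..R, dslope (fun s : ℂ => Complex.exp ((x:ℂ)*s)) 0 ((T:ℝ) + t*I)) +
       (∫ t : ℝ in (-R)..R, (((T:ℝ):ℂ) + t*I)⁻¹) -
       (∫ t : ℝ in (-R)..R, dslope (fun s : ℂ => Complex.exp ((x:ℂ)*s)) 0 ((-T:ℝ) + t*I)) -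
       (∫ t : ℝ in (-R)..R, (((-T:ℝ):ℂ) + t*I)⁻¹) - 2*(π:ℂ))*Complex.I_mul_I
  -- conclude
  have hlim : Tendsto (fun R : ℝ => 2*(π:ℂ) + I*(bf R - tf R) + lf R) atTop (𝓝 (2*(π:ℂ))) := by
    have h0 : Tendsto (fun R : ℝ => I*(bf R - tf R) + lf R) atTop (𝓝 0) := by
      have := ((hbot.sub htop).const_mul I).add hleft
      simpa using this
    have := h0.const_add (2*(π:ℂ))
    simpa [add_assoc] using this
  apply hlim.congr'
  filter_upwards [eventually_gt_atTop 0] with R hR0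
  exact (hev R hR0).symm

end


/-- **The Perron kernel identity.**
For `T > 0` and `x ≠ 0`, the principal-value integral of `e^{x s}/s` along the
vertical line `Re s = T` equals `1` if `x > 0` and `0` if `x < 0`
(the Heaviside function `Θ(x)` away from `x = 0`). -/
theorem stmt1 (T x : ℝ) (hT : 0 < T) (hx : x ≠ 0) :
    Filter.Tendsto
      (fun R : ℝ =>
        (1 / (2 * (Real.pi : ℂ))) *
          ∫ t in (-R)..R,
            Complex.exp ((x : ℂ) * ((T : ℂ) + (t : ℂ) * Complex.I)) /
              ((T : ℂ) + (t : ℂ) * Complex.I))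
      Filter.atTop
      (nhds (if 0 < x then 1 else 0)) := by
  have hpi : (Real.pi : ℂ) ≠ 0 := by exact_mod_cast Real.pi_ne_zero
  rcases hx.lt_or_gt with hneg | hpos
  · rw [if_neg (by linarith)]
    have := (lemA x T hneg hT).const_mul (1/(2*(Real.pi:ℂ)))
    simpa using this
  · rw [if_pos hpos]
    have h1 := (lemB x T hpos hT).const_mul (1/(2*(Real.pi:ℂ)))
    have h2 : (1/(2*(Real.pi:ℂ)))*(2*(Real.pi:ℂ)) = 1 := by field_simp
    rw [h2] at h1
    exact h1
end

section
/- Let λ > 0 and let β > 0 be the unique positive real solution of ∑_{k=1}^∞ (k+1)² e^{-β√(k(k+2))} = λ⁻¹. If s is a complex number with Re(s) > 0 and Im(s) ≠ 0 such that ∑_{k=1}^∞ (k+1)² e^{-s√(k(k+2))} = λ⁻¹, then Re(s) < β strictly. -/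
/-- The LQG area eigenvalue `E_k = √(k(k+2))` for spin `k/2`. -/
noncomputable def Ek (k : ℕ+) : ℝ :=
  Real.sqrt (((k : ℕ) : ℝ) * (((k : ℕ) : ℝ) + 2))

lemma Ek_pos (k : ℕ+) : 0 < Ek k := by
  have h1 : (1 : ℝ) ≤ ((k : ℕ) : ℝ) := by exact_mod_cast k.one_le
  apply Real.sqrt_pos.mpr
  nlinarith

/-- Let `λ > 0` and `β > 0` the positive real solution of
`∑_{k≥1} (k+1)² e^{-β E_k} = λ⁻¹`.  Any complex `s` with `Re s > 0`, `Im s ≠ 0` and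
`∑_{k≥1} (k+1)² e^{-s E_k} = λ⁻¹` satisfies `Re s < β` strictly. -/
theorem stmt6 (lam β : ℝ) (hlam : 0 < lam) (hβ : 0 < β)
    (hβeq : ∑' k : ℕ+, (((k : ℕ) : ℝ) + 1) ^ 2 * Real.exp (-β * Ek k) = lam⁻¹)
    (s : ℂ) (hre : 0 < s.re) (him : s.im ≠ 0)
    (hseq : ∑' k : ℕ+, (((k : ℕ) : ℂ) + 1) ^ 2 * Complex.exp (-s * (Ek k : ℂ))
      = ((lam⁻¹ : ℝ) : ℂ)) :
    s.re < β := by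
  have hlaminv : (0 : ℝ) < lam⁻¹ := inv_pos.mpr hlam
  set t := s.re with ht
  -- the complex series is summable
  have hfC : Summable (fun k : ℕ+ => (((k : ℕ) : ℂ) + 1) ^ 2
      * Complex.exp (-s * (Ek k : ℂ))) := by
    by_contra h
    rw [tsum_eq_zero_of_not_summable h] at hseq
    have : lam⁻¹ = 0 := by exact_mod_cast hseq.symm
    exact hlaminv.ne' this
  -- norm of each term
  have hnorm : ∀ k : ℕ+, ‖(((k : ℕ) : ℂ) + 1) ^ 2 * Complex.exp (-s * (Ek k : ℂ))‖
      = (((k : ℕ) : ℝ) + 1) ^ 2 * Real.exp (-t * Ek k) := by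
    intro k
    rw [norm_mul, norm_pow, Complex.norm_exp]
    have h1 : ‖((k : ℕ) : ℂ) + 1‖ = ((k : ℕ) : ℝ) + 1 := by
      have : (((k : ℕ) : ℂ) + 1) = ((((k : ℕ) : ℝ) + 1 : ℝ) : ℂ) := by push_cast; ring
      rw [this, Complex.norm_real, Real.norm_eq_abs, abs_of_nonneg (by positivity)]
    rw [h1]
    congr 1
    simp [Complex.neg_re, Complex.mul_re, Complex.ofReal_re, Complex.ofReal_im]
    exact Or.inl rfl
  -- the real series at exponent t is summable
  have hg : Summable (fun k : ℕ+ => (((k : ℕ) : ℝ) + 1) ^ 2 * Real.exp (-t * Ek k)) := by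
    have := (summable_norm_iff.mpr hfC)
    simpa only [hnorm] using this
  -- real part of each term
  have hre_term : ∀ k : ℕ+, ((((k : ℕ) : ℂ) + 1) ^ 2 * Complex.exp (-s * (Ek k : ℂ))).re
      = (((k : ℕ) : ℝ) + 1) ^ 2 * Real.exp (-t * Ek k) * Real.cos (s.im * Ek k) := by
    intro k
    have h1 : ((((k : ℕ) : ℂ) + 1) ^ 2) = ((((((k : ℕ) : ℝ) + 1) ^ 2 : ℝ)) : ℂ) := by
      push_cast; ring
    rw [h1, Complex.re_ofReal_mul, Complex.exp_re]
    have h2 : (-s * (Ek k : ℂ)).re = -t * Ek k := by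
      simp [Complex.neg_re, Complex.mul_re, Complex.ofReal_re, Complex.ofReal_im]
      exact Or.inl rfl
    have h3 : (-s * (Ek k : ℂ)).im = -(s.im * Ek k) := by
      simp [Complex.neg_im, Complex.mul_im, Complex.ofReal_re, Complex.ofReal_im]
    rw [h2, h3, Real.cos_neg, mul_assoc]
  -- λ⁻¹ equals the sum of real parts
  have h1 : lam⁻¹ = ∑' k : ℕ+,
      (((k : ℕ) : ℝ) + 1) ^ 2 * Real.exp (-t * Ek k) * Real.cos (s.im * Ek k) := by
    have := congrArg Complex.re hseq
    rw [Complex.re_tsum hfC] at this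
    simp only [Complex.ofReal_re] at this
    rw [← this]
    exact tsum_congr hre_term
  -- there is some k₀ with cos (s.im * E_{k₀}) < 1
  have hk0 : ∃ k0 : ℕ+, Real.cos (s.im * Ek k0) < 1 := by
    by_contra h
    push_neg at h
    have hcos : ∀ k : ℕ+, Real.cos (s.im * Ek k) = 1 :=
      fun k => le_antisymm (Real.cos_le_one _) (h k)
    obtain ⟨m, hm⟩ := (Real.cos_eq_one_iff _).1 (hcos 1)
    obtain ⟨n, hn⟩ := (Real.cos_eq_one_iff _).1 (hcos 2)
    have hE1 : Ek 1 = Real.sqrt 3 := by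
      unfold Ek; norm_num
    have hE2 : Ek 2 = Real.sqrt 8 := by
      unfold Ek; norm_num
    rw [hE1] at hm
    rw [hE2] at hn
    have hpi := Real.pi_pos
    have h3pos : (0 : ℝ) < Real.sqrt 3 := Real.sqrt_pos.mpr (by norm_num)
    have h8pos : (0 : ℝ) < Real.sqrt 8 := Real.sqrt_pos.mpr (by norm_num)
    have hmne : (m : ℝ) ≠ 0 := by
      intro h0
      rw [h0, zero_mul] at hm
      exact him (by
        have := hm.symm
        rcases mul_eq_zero.mp this with h' | h'
        · exact h'
        · exact absurd h' h3pos.ne')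
    have hnne : (n : ℝ) ≠ 0 := by
      intro h0
      rw [h0, zero_mul] at hn
      exact him (by
        have := hn.symm
        rcases mul_eq_zero.mp this with h' | h'
        · exact h'
        · exact absurd h' h8pos.ne')
    -- cancel s.im : √3 * n = √8 * m
    have hkey : Real.sqrt 3 * (n : ℝ) = Real.sqrt 8 * (m : ℝ) := by
      have e1 : s.im * Real.sqrt 3 * (n : ℝ) = (m : ℝ) * (2 * Real.pi) * (n : ℝ) := by
        rw [hm]
      have e2 : s.im * Real.sqrt 8 * (m : ℝ) = (n : ℝ) * (2 * Real.pi) * (m : ℝ) := by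
        rw [hn]
      have : s.im * (Real.sqrt 3 * (n : ℝ)) = s.im * (Real.sqrt 8 * (m : ℝ)) := by
        nlinarith [e1, e2]
      exact mul_left_cancel₀ him this
    -- multiply by √2 : √6 * n = 4 * m
    have h2_8 : Real.sqrt 2 * Real.sqrt 8 = 4 := by
      rw [← Real.sqrt_mul (by norm_num : (0:ℝ) ≤ 2)]
      rw [show (2 : ℝ) * 8 = 4 ^ 2 by norm_num, Real.sqrt_sq (by norm_num : (0:ℝ) ≤ 4)]
    have h2_3 : Real.sqrt 2 * Real.sqrt 3 = Real.sqrt 6 := by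
      rw [← Real.sqrt_mul (by norm_num : (0:ℝ) ≤ 2)]; norm_num
    have hkey2 : Real.sqrt 6 * (n : ℝ) = 4 * (m : ℝ) := by
      have := congrArg (fun x => Real.sqrt 2 * x) hkey
      simp only [← mul_assoc] at this
      rw [h2_3, h2_8] at this
      exact this
    -- contradiction with irrationality of √6
    have h6 : Irrational (Real.sqrt 6) := by
      have : Irrational (Real.sqrt ((6 : ℕ) : ℝ)) :=
        irrational_sqrt_natCast_iff.mpr (by
          rintro ⟨r, hr⟩
          have hr3 : r ≤ 3 := by nlinarith
          interval_cases r <;> omega)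
      simpa using this
    have : Real.sqrt 6 = (((4 * m / n : ℚ) : ℝ)) := by
      push_cast
      field_simp at hkey2 ⊢
      linarith [hkey2]
    rw [this] at h6
    exact Rat.not_irrational _ h6
  obtain ⟨k0, hk0lt⟩ := hk0
  -- strict inequality λ⁻¹ < F(t)
  have hlt : lam⁻¹ < ∑' k : ℕ+, (((k : ℕ) : ℝ) + 1) ^ 2 * Real.exp (-t * Ek k) := by
    rw [h1]
    refine Summable.tsum_lt_tsum (f := fun k : ℕ+ =>
        (((k : ℕ) : ℝ) + 1) ^ 2 * Real.exp (-t * Ek k) * Real.cos (s.im * Ek k))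
      (i := k0) ?_ ?_ ?_ hg
    · intro k
      have hpos : (0 : ℝ) < (((k : ℕ) : ℝ) + 1) ^ 2 * Real.exp (-t * Ek k) := by positivity
      calc (((k : ℕ) : ℝ) + 1) ^ 2 * Real.exp (-t * Ek k) * Real.cos (s.im * Ek k)
          ≤ (((k : ℕ) : ℝ) + 1) ^ 2 * Real.exp (-t * Ek k) * 1 := by
            exact mul_le_mul_of_nonneg_left (Real.cos_le_one _) hpos.le
        _ = (((k : ℕ) : ℝ) + 1) ^ 2 * Real.exp (-t * Ek k) := by ring
    · have hpos : (0 : ℝ) < (((k0 : ℕ) : ℝ) + 1) ^ 2 * Real.exp (-t * Ek k0) := by positivity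
      calc (((k0 : ℕ) : ℝ) + 1) ^ 2 * Real.exp (-t * Ek k0) * Real.cos (s.im * Ek k0)
          < (((k0 : ℕ) : ℝ) + 1) ^ 2 * Real.exp (-t * Ek k0) * 1 :=
            mul_lt_mul_of_pos_left hk0lt hpos
        _ = (((k0 : ℕ) : ℝ) + 1) ^ 2 * Real.exp (-t * Ek k0) := by ring
    · -- summability of the cos-weighted series by comparison
      apply Summable.of_norm
      apply hg.of_nonneg_of_le (fun k => norm_nonneg _)
      intro k
      rw [norm_mul]
      have hpos : (0 : ℝ) ≤ (((k : ℕ) : ℝ) + 1) ^ 2 * Real.exp (-t * Ek k) := by positivity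
      calc ‖(((k : ℕ) : ℝ) + 1) ^ 2 * Real.exp (-t * Ek k)‖ * ‖Real.cos (s.im * Ek k)‖
          ≤ ‖(((k : ℕ) : ℝ) + 1) ^ 2 * Real.exp (-t * Ek k)‖ * 1 := by
            exact mul_le_mul_of_nonneg_left (by
              rw [Real.norm_eq_abs]; exact Real.abs_cos_le_one _) (norm_nonneg _)
        _ = (((k : ℕ) : ℝ) + 1) ^ 2 * Real.exp (-t * Ek k) := by
            rw [mul_one, Real.norm_eq_abs, abs_of_nonneg hpos]
  -- summability of the real series at β
  have hβsum : Summable (fun k : ℕ+ => (((k : ℕ) : ℝ) + 1) ^ 2 * Real.exp (-β * Ek k)) := by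
    by_contra h
    rw [tsum_eq_zero_of_not_summable h] at hβeq
    exact hlaminv.ne hβeq
  -- conclude by monotonicity
  by_contra hcon
  push_neg at hcon
  have hmono : ∀ k : ℕ+, (((k : ℕ) : ℝ) + 1) ^ 2 * Real.exp (-t * Ek k)
      ≤ (((k : ℕ) : ℝ) + 1) ^ 2 * Real.exp (-β * Ek k) := by
    intro k
    have : -t * Ek k ≤ -β * Ek k := by
      have := Ek_pos k
      nlinarith
    exact mul_le_mul_of_nonneg_left (Real.exp_le_exp.mpr this) (by positivity)
  have hFle : (∑' k : ℕ+, (((k : ℕ) : ℝ) + 1) ^ 2 * Real.exp (-t * Ek k))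
      ≤ ∑' k : ℕ+, (((k : ℕ) : ℝ) + 1) ^ 2 * Real.exp (-β * Ek k) :=
    Summable.tsum_le_tsum hmono hg hβsum
  rw [hβeq] at hFle
  exact absurd (hlt.trans_le hFle) (lt_irrefl _)
end

section
/- Let λ > 0 and let β > 0 be the unique positive real solution of ∑_{k=1}^∞ (k+1)² e^{-β√(k(k+2))} = λ⁻¹. If s is a complex number with Re(s) > 0 such that the alternating series ∑_{k=1}^∞ (-1)^k (k+1)² e^{-s√(k(k+2))} equals λ⁻¹, then Re(s) < β strictly. -/
lemma Ek_nonneg (k : ℕ+) : 0 ≤ Ek k := Real.sqrt_nonneg _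

lemma Ek_ge (k : ℕ+) : ((k : ℕ) : ℝ) ≤ Ek k := by
  have : ((k : ℕ) : ℝ) = Real.sqrt (((k : ℕ) : ℝ) ^ 2) := by
    rw [Real.sqrt_sq (by positivity)]
  rw [this]
  apply Real.sqrt_le_sqrt
  have : (0:ℝ) ≤ ((k : ℕ) : ℝ) := by positivity
  nlinarith

lemma summable_aux {b : ℝ} (hb : 0 < b) :
    Summable (fun k : ℕ+ => (((k : ℕ) : ℝ) + 1) ^ 2 * Real.exp (-b * Ek k)) := by
  set r : ℝ := Real.exp (-b) with hr
  have hr0 : 0 ≤ r := Real.exp_nonneg _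
  have hr1 : r < 1 := Real.exp_lt_one_iff.2 (by linarith)
  have hrn : ‖r‖ < 1 := by rwa [Real.norm_eq_abs, abs_of_nonneg hr0]
  have hsum : Summable (fun n : ℕ => ((n : ℝ) + 1) ^ 2 * r ^ n) := by
    have h2 : Summable (fun n : ℕ => ((n : ℝ)) ^ 2 * r ^ n) :=
      summable_pow_mul_geometric_of_norm_lt_one 2 hrn
    have h1 : Summable (fun n : ℕ => ((n : ℝ)) ^ 1 * r ^ n) :=
      summable_pow_mul_geometric_of_norm_lt_one 1 hrn
    have h0 : Summable (fun n : ℕ => r ^ n) := summable_geometric_of_lt_one hr0 hr1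
    have := (h2.add ((h1.mul_left 2).add h0))
    apply this.congr
    intro n; ring
  have hsum' : Summable (fun k : ℕ+ => ((((k : ℕ)) : ℝ) + 1) ^ 2 * r ^ ((k : ℕ))) :=
    hsum.comp_injective (fun a b h => by exact_mod_cast PNat.coe_injective h)
  apply Summable.of_nonneg_of_le (fun k => by positivity) _ hsum'
  intro k
  have h1 : Real.exp (-b * Ek k) ≤ r ^ ((k : ℕ)) := by
    rw [hr, ← Real.exp_nat_mul]
    apply Real.exp_le_exp.2
    have := Ek_ge k
    nlinarith [Ek_nonneg k]
  have h2 : (0:ℝ) ≤ (((k : ℕ) : ℝ) + 1) ^ 2 := by positivity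
  nlinarith [Real.exp_nonneg (-b * Ek k)]

lemma cos_eq_neg_one_iff (x : ℝ) :
    Real.cos x = -1 ↔ ∃ n : ℤ, (2 * n + 1) * Real.pi = x := by
  constructor
  · intro h
    have : Real.cos (x + Real.pi) = 1 := by rw [Real.cos_add_pi, h]; ring
    obtain ⟨n, hn⟩ := (Real.cos_eq_one_iff _).1 this
    exact ⟨n - 1, by push_cast; linarith⟩
  · rintro ⟨n, rfl⟩
    have : (2 * (n:ℝ) + 1) * Real.pi = 2 * n * Real.pi + Real.pi := by ring
    rw [this, Real.cos_add_pi]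
    have : Real.cos (2 * (n:ℝ) * Real.pi) = 1 := by
      apply (Real.cos_eq_one_iff _).2 ⟨n, by ring⟩
    rw [this]

/-- Let `λ > 0` and `β > 0` the positive real solution of
`∑_{k≥1} (k+1)² e^{-β E_k} = λ⁻¹`.  Any complex `s` with `Re s > 0` solving the
alternating equation `∑_{k≥1} (-1)^k (k+1)² e^{-s E_k} = λ⁻¹` satisfies
`Re s < β` strictly. -/
theorem stmt7 (lam β : ℝ) (hlam : 0 < lam) (hβ : 0 < β)
    (hβeq : ∑' k : ℕ+, (((k : ℕ) : ℝ) + 1) ^ 2 * Real.exp (-β * Ek k) = lam⁻¹)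
    (s : ℂ) (hre : 0 < s.re)
    (hseq : ∑' k : ℕ+, (-1 : ℂ) ^ (k : ℕ) * (((k : ℕ) : ℂ) + 1) ^ 2 *
        Complex.exp (-s * (Ek k : ℂ)) = ((lam⁻¹ : ℝ) : ℂ)) :
    s.re < β := by
  by_contra hcon
  push_neg at hcon   -- β ≤ s.re
  set a := s.re with ha
  set t := s.im with ht
  set F : ℕ+ → ℂ := fun k => (-1 : ℂ) ^ (k : ℕ) * (((k : ℕ) : ℂ) + 1) ^ 2 *
      Complex.exp (-s * (Ek k : ℂ)) with hF
  have hnorm : ∀ k : ℕ+, ‖F k‖ = (((k : ℕ) : ℝ) + 1) ^ 2 * Real.exp (-a * Ek k) := by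
    intro k
    have hres : (-s * (Ek k : ℂ)).re = -a * Ek k := by simp [Complex.mul_re, ha]
    rw [hF]
    simp only [norm_mul, norm_pow, norm_neg, norm_one, one_pow, one_mul,
      Complex.norm_exp, hres]
    congr 1
    have : (((k : ℕ) : ℂ) + 1) = ((((k : ℕ) : ℝ) + 1 : ℝ) : ℂ) := by push_cast; ring
    rw [this, Complex.norm_real, Real.norm_eq_abs, abs_of_nonneg (by positivity)]
  have hFsum : Summable F := by
    apply Summable.of_norm
    have := summable_aux (b := a) hre
    exact this.congr (fun k => (hnorm k).symm)
  set f : ℕ+ → ℝ := fun k => (F k).re with hf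
  have hfsum : Summable f := (Complex.hasSum_re hFsum.hasSum).summable
  set g : ℕ+ → ℝ := fun k => (((k : ℕ) : ℝ) + 1) ^ 2 * Real.exp (-β * Ek k) with hg
  have hgsum : Summable g := summable_aux hβ
  have hfle : ∀ k, f k ≤ g k := by
    intro k
    have h1 : f k ≤ ‖F k‖ := Complex.re_le_norm _
    have h2 : Real.exp (-a * Ek k) ≤ Real.exp (-β * Ek k) := by
      apply Real.exp_le_exp.2
      nlinarith [Ek_nonneg k]
    calc f k ≤ ‖F k‖ := h1
      _ = (((k : ℕ) : ℝ) + 1) ^ 2 * Real.exp (-a * Ek k) := hnorm k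
      _ ≤ (((k : ℕ) : ℝ) + 1) ^ 2 * Real.exp (-β * Ek k) := by gcongr
      _ = g k := rfl
  have htsumf : ∑' k, f k = lam⁻¹ := by
    have h := Complex.re_tsum hFsum
    rw [hseq, Complex.ofReal_re] at h
    exact h.symm
  have heq : ∀ k, f k = g k := by
    intro k
    by_contra hne
    have hlt : f k < g k := lt_of_le_of_ne (hfle k) hne
    have := Summable.tsum_lt_tsum hfle hlt hfsum hgsum
    rw [htsumf, hβeq] at this
    exact lt_irrefl _ this
  -- compute f k explicitly
  have hfval : ∀ k : ℕ+, f k = (-1 : ℝ) ^ (k : ℕ) * (((k : ℕ) : ℝ) + 1) ^ 2 *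
      (Real.exp (-a * Ek k) * Real.cos (t * Ek k)) := by
    intro k
    have hres : (-s * (Ek k : ℂ)).re = -a * Ek k := by simp [Complex.mul_re, ha]
    have hims : (-s * (Ek k : ℂ)).im = -(t * Ek k) := by
      simp [Complex.mul_im, ht]
    have hcast : F k = (((-1 : ℝ) ^ (k : ℕ) * (((k : ℕ) : ℝ) + 1) ^ 2 : ℝ) : ℂ) *
        Complex.exp (-s * (Ek k : ℂ)) := by
      rw [hF]; push_cast; ring
    rw [hf]
    simp only [hcast, Complex.re_ofReal_mul, Complex.exp_re, hres, hims, Real.cos_neg]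
  -- equality at k = 1
  have hE1 : Ek 1 = Real.sqrt 3 := by
    unfold Ek; norm_num
  have hE2 : Ek 2 = Real.sqrt 8 := by
    unfold Ek; norm_num
  have hE1pos : 0 < Ek 1 := by rw [hE1]; positivity
  have hE2pos : 0 < Ek 2 := by rw [hE2]; positivity
  have key : ∀ k : ℕ+, (-1 : ℝ) ^ (k : ℕ) * Real.cos (t * Ek k) = 1 ∧
      Real.exp (-a * Ek k) = Real.exp (-β * Ek k) := by
    intro k
    have h := heq k
    rw [hfval k, hg] at h
    simp only at h
    set u := Real.exp (-a * Ek k) with hu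
    set v := Real.exp (-β * Ek k) with hv
    set c := (-1 : ℝ) ^ (k : ℕ) * Real.cos (t * Ek k) with hc
    have hupos : 0 < u := Real.exp_pos _
    have hvpos : 0 < v := Real.exp_pos _
    have huv : u ≤ v := by
      apply Real.exp_le_exp.2; nlinarith [Ek_nonneg k]
    have hkpos : (0:ℝ) < (((k : ℕ) : ℝ) + 1) ^ 2 := by positivity
    -- h : (-1)^k * (k+1)^2 * (u * cos) = (k+1)^2 * v
    have h' : c * u = v := by
      have : (((k : ℕ) : ℝ) + 1) ^ 2 * (c * u) = (((k : ℕ) : ℝ) + 1) ^ 2 * v := by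
        rw [hc, hu, hv]; linear_combination h
      exact mul_left_cancel₀ (ne_of_gt hkpos) this
    have hcle : c ≤ 1 := by
      rw [hc]
      have h1 := Real.neg_one_le_cos (t * Ek k)
      have h2 := Real.cos_le_one (t * Ek k)
      rcases Nat.even_or_odd (k : ℕ) with he | ho
      · rw [he.neg_one_pow]; linarith
      · rw [ho.neg_one_pow]; linarith
    have hceq : c = 1 := by
      by_contra hc1
      have : c < 1 := lt_of_le_of_ne hcle hc1
      have : c * u < v := by nlinarith
      linarith [h'.ge, this]
    constructor
    · exact hceq
    · show u = v
      rw [← h', hceq, one_mul]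
  have h1 := (key 1).1
  have h2 := (key 2).1
  -- k = 1 : (-1)^1 * cos (t * E1) = 1  →  cos (t*E1) = -1
  have hcos1 : Real.cos (t * Ek 1) = -1 := by
    norm_num at h1
    linarith
  have hcos2 : Real.cos (t * Ek 2) = 1 := by
    norm_num at h2
    exact h2
  obtain ⟨m, hm⟩ := (cos_eq_neg_one_iff _).1 hcos1
  obtain ⟨n, hn⟩ := (Real.cos_eq_one_iff _).1 hcos2
  -- t ≠ 0
  have hπ : 0 < Real.pi := Real.pi_pos
  have htne : t ≠ 0 := by
    intro h0
    rw [h0, zero_mul] at hm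
    have : (2 * (m:ℝ) + 1) ≠ 0 := by
      intro hz
      have : (2 * m + 1 : ℤ) = 0 := by exact_mod_cast hz
      omega
    have := mul_ne_zero this (ne_of_gt hπ)
    exact this hm
  -- 2n * (t * E1) = (2m+1) * (t * E2) * ... derive 2n * E1 = (2m+1) * E2? no:
  -- t*E1 = (2m+1)π, t*E2 = 2nπ. So (2n)*(t*E1) = (2m+1)*(t*E2)
  have hcomb : (2 * (n:ℝ)) * (t * Ek 1) = (2 * (m:ℝ) + 1) * (t * Ek 2) := by
    rw [← hm, ← hn]; ring
  have hcomb' : (2 * (n:ℝ)) * Ek 1 = (2 * (m:ℝ) + 1) * Ek 2 := by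
    have : t * ((2 * (n:ℝ)) * Ek 1) = t * ((2 * (m:ℝ) + 1) * Ek 2) := by
      linear_combination hcomb
    exact mul_left_cancel₀ htne this
  have hsq : (2 * (n:ℝ)) ^ 2 * 3 = (2 * (m:ℝ) + 1) ^ 2 * 8 := by
    have h3 : Ek 1 ^ 2 = 3 := by
      rw [hE1, Real.sq_sqrt]; norm_num
    have h8 : Ek 2 ^ 2 = 8 := by
      rw [hE2, Real.sq_sqrt]; norm_num
    have hsq' : (2 * (n:ℝ) * Ek 1) ^ 2 = ((2 * (m:ℝ) + 1) * Ek 2) ^ 2 := by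
      rw [hcomb']
    linear_combination hsq' - (2 * (n:ℝ)) ^ 2 * h3 + (2 * (m:ℝ) + 1) ^ 2 * h8
  have hZ : (2 * n) ^ 2 * 3 = (2 * m + 1) ^ 2 * 8 := by exact_mod_cast hsq
  -- 12 n² = 8(2m+1)² → 3n² = 2(2m+1)²
  have h3n : 3 * n ^ 2 = 2 * (2 * m + 1) ^ 2 := by ring_nf at hZ ⊢; linarith
  have hdvd : (2:ℤ) ∣ 3 * n ^ 2 := ⟨(2 * m + 1) ^ 2, h3n⟩
  have h2n2 : (2:ℤ) ∣ n ^ 2 := by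
    rcases (Int.prime_two.2.2 3 (n ^ 2) hdvd) with h | h
    · norm_num at h
    · exact h
  have h2n : (2:ℤ) ∣ n := Int.prime_two.dvd_of_dvd_pow h2n2
  obtain ⟨p, rfl⟩ := h2n
  have h6 : 6 * p ^ 2 = (2 * m + 1) ^ 2 := by ring_nf at h3n ⊢; linarith
  have hodd : (2:ℤ) ∣ (2 * m + 1) ^ 2 := ⟨3 * p ^ 2, by linarith⟩
  have := Int.prime_two.dvd_of_dvd_pow hodd
  omega
end

section
/- For every real λ > 0 there exists a real s > 0 such that the family indexed by pairs (p, (k_1, …, k_p)) — with p a positive integer and each k_i a positive integer — whose value is λ^p · (∏_{i=1}^p (k_i+1)²) · e^{-s ∑_{i=1}^p √(k_i(k_i+2))}, is summable; in particular ∑_{p=1}^∞ ∑_{k_1,…,k_p ≥ 1} λ^p ∏_{i=1}^p (k_i+1)² e^{-s·α_{p,k⃗}} < ∞, where α_{p,k⃗} = ∑_{i=1}^p √(k_i(k_i+2)). -/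
lemma pi_summable (h : ℕ+ → ℝ) (hnn : ∀ k, 0 ≤ h k) (hh : Summable h) (n : ℕ) :
    Summable (fun v : Fin n → ℕ+ => ∏ i, h (v i)) ∧
      (∑' v : Fin n → ℕ+, ∏ i, h (v i)) = (∑' k, h k) ^ n := by
  induction n with
  | zero =>
      constructor
      · exact Summable.of_finite
      · simp [tsum_eq_single (fun i : Fin 0 => (1 : ℕ+))
          (fun b hb => absurd (funext (fun i => i.elim0)) hb)]
  | succ n ih =>
      let e : ℕ+ × (Fin n → ℕ+) ≃ (Fin (n + 1) → ℕ+) := Fin.consEquiv fun _ => ℕ+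
      have key : ∀ p : ℕ+ × (Fin n → ℕ+),
          (∏ i, h (e p i)) = h p.1 * ∏ i, h (p.2 i) := by
        intro p
        rw [Fin.prod_univ_succ]
        simp [e, Fin.consEquiv]
      have hs : Summable (fun p : ℕ+ × (Fin n → ℕ+) => h p.1 * ∏ i, h (p.2 i)) :=
        Summable.mul_of_nonneg (f := h) (g := fun v : Fin n → ℕ+ => ∏ i, h (v i))
          hh ih.1 hnn (fun v => Finset.prod_nonneg fun i _ => hnn _)
      constructor
      · rw [← e.summable_iff]
        exact hs.congr fun p => (key p).symm
      · rw [← e.tsum_eq]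
        calc (∑' p : ℕ+ × (Fin n → ℕ+), ∏ i, h (e p i))
            = ∑' p : ℕ+ × (Fin n → ℕ+), h p.1 * ∏ i, h (p.2 i) := tsum_congr key
          _ = (∑' k, h k) * ∑' v : Fin n → ℕ+, ∏ i, h (v i) := by
              rw [Summable.tsum_prod hs]
              simp_rw [tsum_mul_left]
              rw [tsum_mul_right]
          _ = (∑' k, h k) ^ (n + 1) := by rw [ih.2, pow_succ]; ring

/-- For every `λ > 0` there is `s > 0` such that the family indexed by pairs
`(p, (k₁, …, k_p))` of a positive integer `p` and positive integers `kᵢ`, with value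
`λ^p ∏ᵢ (kᵢ+1)² e^{-s ∑ᵢ √(kᵢ(kᵢ+2))}`, is summable. -/
theorem stmt10 (lam : ℝ) (hlam : 0 < lam) :
    ∃ s : ℝ, 0 < s ∧
      Summable (fun x : Σ p : ℕ+, Fin (p : ℕ) → ℕ+ =>
        lam ^ ((x.1 : ℕ)) *
          (∏ i, (((x.2 i : ℕ) : ℝ) + 1) ^ 2) *
          Real.exp (-s * ∑ i,
            Real.sqrt (((x.2 i : ℕ) : ℝ) * (((x.2 i : ℕ) : ℝ) + 2)))) := by
  set s : ℝ := Real.log (16 * lam + 8) with hs_def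
  have h16 : (1:ℝ) < 16 * lam + 8 := by nlinarith
  refine ⟨s, Real.log_pos h16, ?_⟩
  set r : ℝ := Real.exp (-s) with hr_def
  have hrval : r = (16 * lam + 8)⁻¹ := by
    rw [hr_def, Real.exp_neg, hs_def, Real.exp_log (by linarith)]
  set t : ℝ := 4 * r with ht_def
  have ht0 : 0 ≤ t := by positivity
  have ht1 : t < 1 := by
    rw [ht_def, hrval]
    rw [mul_inv_lt_iff₀ (by linarith)]
    nlinarith
  -- the single-face weight
  set h : ℕ+ → ℝ := fun k =>
    lam * ((((k : ℕ) : ℝ) + 1) ^ 2 *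
      Real.exp (-s * Real.sqrt (((k : ℕ) : ℝ) * (((k : ℕ) : ℝ) + 2)))) with hh_def
  have hnn : ∀ k, 0 ≤ h k := fun k => by positivity
  -- bound h k ≤ lam * t ^ k
  have hbound : ∀ k : ℕ+, h k ≤ lam * t ^ (k : ℕ) := by
    intro k
    have hk0 : (0:ℝ) ≤ ((k:ℕ):ℝ) := by positivity
    have h1 : (((k:ℕ):ℝ) + 1) ^ 2 ≤ 4 ^ (k:ℕ) := by
      have : ((k:ℕ):ℝ) + 1 ≤ 2 ^ (k:ℕ) := by
        have := Nat.lt_two_pow_self (n := (k:ℕ))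
        exact_mod_cast Nat.succ_le_of_lt this
      calc (((k:ℕ):ℝ) + 1) ^ 2 ≤ ((2:ℝ) ^ (k:ℕ)) ^ 2 :=
            pow_le_pow_left₀ (by positivity) this 2
        _ = 4 ^ (k:ℕ) := by rw [← pow_mul, mul_comm, pow_mul]; norm_num
    have h2 : Real.exp (-s * Real.sqrt (((k:ℕ):ℝ) * (((k:ℕ):ℝ) + 2))) ≤ r ^ (k:ℕ) := by
      have hsq : ((k:ℕ):ℝ) ≤ Real.sqrt (((k:ℕ):ℝ) * (((k:ℕ):ℝ) + 2)) := by
        rw [Real.le_sqrt hk0]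
        · nlinarith
        · positivity
      have hs0 : (0:ℝ) ≤ s := (Real.log_pos h16).le
      have : -s * Real.sqrt (((k:ℕ):ℝ) * (((k:ℕ):ℝ) + 2)) ≤ (k:ℕ) * (-s) := by
        have := mul_le_mul_of_nonneg_left hsq hs0
        nlinarith
      calc Real.exp (-s * Real.sqrt (((k:ℕ):ℝ) * (((k:ℕ):ℝ) + 2)))
          ≤ Real.exp ((k:ℕ) * (-s)) := Real.exp_le_exp.mpr this
        _ = r ^ (k:ℕ) := by rw [Real.exp_nat_mul]
    calc h k ≤ lam * (4 ^ (k:ℕ) * r ^ (k:ℕ)) := by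
          apply mul_le_mul_of_nonneg_left _ hlam.le
          exact mul_le_mul h1 h2 (Real.exp_nonneg _) (by positivity)
      _ = lam * t ^ (k:ℕ) := by rw [ht_def, mul_pow]
  have hts : Summable (fun k : ℕ+ => lam * t ^ (k:ℕ)) :=
    (((summable_geometric_of_lt_one ht0 ht1).comp_injective
      PNat.coe_injective).mul_left lam)
  have hh_sum : Summable h :=
    Summable.of_nonneg_of_le hnn hbound hts
  -- the tsum bound
  have htsum_t : (∑' k : ℕ+, lam * t ^ (k:ℕ)) = lam * (t * (1 - t)⁻¹) := by
    rw [tsum_mul_left]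
    congr 1
    rw [← Equiv.pnatEquivNat.symm.tsum_eq]
    simp only [Equiv.pnatEquivNat_symm_apply, Nat.succPNat_coe]
    calc (∑' j : ℕ, t ^ (j + 1)) = ∑' j : ℕ, t * t ^ j := by
          simp [pow_succ, mul_comm]
      _ = t * (1 - t)⁻¹ := by rw [tsum_mul_left, tsum_geometric_of_lt_one ht0 ht1]
  set c : ℝ := ∑' k, h k with hc_def
  have hc0 : 0 ≤ c := tsum_nonneg hnn
  have hc1 : c < 1 := by
    have hle : c ≤ lam * (t * (1 - t)⁻¹) := by
      rw [← htsum_t]; exact Summable.tsum_le_tsum hbound hh_sum hts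
    have ht' : t = (4 * lam + 2)⁻¹ := by
      rw [ht_def, hrval]
      have h1 : (16 * lam + 8 : ℝ) ≠ 0 := by positivity
      have h2 : (4 * lam + 2 : ℝ) ≠ 0 := by positivity
      field_simp
      ring
    have h1 : (0:ℝ) < 4 * lam + 2 := by linarith
    have h4 : 1 - t = (4 * lam + 1) / (4 * lam + 2) := by
      rw [ht', eq_div_iff h1.ne', sub_mul, inv_mul_cancel₀ h1.ne']; ring
    have h5 : (0:ℝ) < 1 - t := by rw [h4]; positivity
    have h6 : lam * (t * (1 - t)⁻¹) = (lam * t) / (1 - t) := by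
      rw [div_eq_mul_inv]; ring
    have hlt : lam * (t * (1 - t)⁻¹) < 1 := by
      rw [h6, div_lt_one h5, h4, ht', ← div_eq_mul_inv, div_lt_div_iff₀ h1 h1]
      nlinarith
    linarith
  -- rewrite the summand as a product
  have hfx : ∀ x : Σ p : ℕ+, Fin (p : ℕ) → ℕ+,
      lam ^ ((x.1 : ℕ)) *
          (∏ i, (((x.2 i : ℕ) : ℝ) + 1) ^ 2) *
          Real.exp (-s * ∑ i,
            Real.sqrt (((x.2 i : ℕ) : ℝ) * (((x.2 i : ℕ) : ℝ) + 2)))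
        = ∏ i, h (x.2 i) := by
    rintro ⟨p, v⟩
    simp only [hh_def]
    rw [Finset.mul_sum, Real.exp_sum, mul_assoc, ← Finset.prod_mul_distrib]
    conv_rhs => rw [Finset.prod_mul_distrib, Finset.prod_const, Finset.card_univ,
      Fintype.card_fin]
  refine Summable.congr ?_ (fun x => (hfx x).symm)
  apply (summable_sigma_of_nonneg
      (f := fun x : Σ p : ℕ+, Fin (p : ℕ) → ℕ+ => ∏ i, h (x.2 i))
      (fun x => Finset.prod_nonneg fun i _ => hnn _)).mpr
  constructor
  · exact fun p => (pi_summable h hnn hh_sum p).1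
  · have heq : (fun p : ℕ+ => ∑' v : Fin (p:ℕ) → ℕ+, ∏ i, h (v i))
        = fun p : ℕ+ => c ^ (p:ℕ) :=
      funext fun p => (pi_summable h hnn hh_sum p).2
    rw [heq]
    exact (summable_geometric_of_lt_one hc0 hc1).comp_injective PNat.coe_injective
end
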